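/- For two pure states |ψ⟩ and |φ⟩ on a bipartite space H ⊗ H', the trace norm of the partial trace of the off-diagonal operator is bounded by 1: ‖Tr_H(|φ⟩⟨ψ|)‖_tr ≤ 1, where Tr_H denotes partial trace over the first factor. -/

import Mathlib

open Finset
open scoped ComplexOrder

noncomputable section

/-- The swap matrix on `H ⊗ H`. -/
def swapMatrix (ι : Type*) [Fintype ι] [DecidableEq ι] : Matrix (ι × ι) (ι × ι) ℂ :=
  Matrix.of fun p q => if p.1 = q.2 ∧ p.2 = q.1 then 1 else 0

/-- Partial trace over the first tensor factor. -/
def ptraceFst {ι κ : Type*} [Fintype ι] (M : Matrix (ι × κ) (ι × κ) ℂ) : Matrix κ κ ℂ :=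
  Matrix.of fun j j' => ∑ i, M (i, j) (i, j')

/-- Partial trace over the second tensor factor. -/
def ptraceSnd {ι κ : Type*} [Fintype κ] (M : Matrix (ι × κ) (ι × κ) ℂ) : Matrix ι ι ℂ :=
  Matrix.of fun i i' => ∑ j, M (i, j) (i', j)

/-- The outer product `|ψ⟩⟨φ|`. -/
def outer {n : Type*} (ψ φ : n → ℂ) : Matrix n n ℂ :=
  Matrix.of fun p q => ψ p * star (φ q)

/-- The square root of a positive semidefinite matrix, as defined in the older Mathlib
(`Matrix.PosSemidef.sqrt`, since removed). -/
def Matrix.PosSemidef.sqrt {n : Type*} [Fintype n] [DecidableEq n] {A : Matrix n n ℂ}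
    (hA : A.PosSemidef) : Matrix n n ℂ :=
  hA.1.eigenvectorUnitary.1 * Matrix.diagonal ((↑) ∘ (Real.sqrt ·) ∘ hA.1.eigenvalues) *
    (star hA.1.eigenvectorUnitary : Matrix n n ℂ)

/-- The trace norm `‖A‖_tr = Tr √(AᴴA)`. -/
def traceNorm {n : Type*} [Fintype n] [DecidableEq n] (A : Matrix n n ℂ) : ℝ :=
  ((Matrix.posSemidef_conjTranspose_mul_self A).sqrt.trace).re

/-- The trace distance between two states. -/
def traceDist {n : Type*} [Fintype n] [DecidableEq n] (ρ σ : Matrix n n ℂ) : ℝ :=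
  (1 / 2) * traceNorm (ρ - σ)

open Matrix

/-- For unit vectors `|ψ⟩, |φ⟩` in `H ⊗ H'`, the trace norm of the partial trace
(over the first factor) of `|φ⟩⟨ψ|` is at most 1. -/
theorem stmt_9 {ι κ : Type*} [Fintype ι] [Fintype κ] [DecidableEq κ]
    (ψ φ : EuclideanSpace ℂ (ι × κ)) (hψ : ‖ψ‖ = 1) (hφ : ‖φ‖ = 1) :
    traceNorm (ptraceFst (outer φ ψ)) ≤ 1 := by
  classical
  set M : Matrix κ κ ℂ := ptraceFst (outer φ ψ) with hMdef
  have hP : (Mᴴ * M).PosSemidef := Matrix.posSemidef_conjTranspose_mul_self M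
  have hH : (Mᴴ * M).IsHermitian := hP.1
  set lam : κ → ℝ := hH.eigenvalues with hlamdef
  set σ : κ → ℝ := fun i => Real.sqrt (lam i) with hσdef
  have hlam0 : ∀ i, 0 ≤ lam i := fun i => hP.eigenvalues_nonneg i
  have hσ0 : ∀ i, 0 ≤ σ i := fun i => Real.sqrt_nonneg _
  have hσsq : ∀ i, σ i ^ 2 = lam i := fun i => Real.sq_sqrt (hlam0 i)
  -- Step 1: trace norm is the sum of square roots of eigenvalues
  have step1 : traceNorm M = ∑ i, σ i := by
    have hU : (star (hH.eigenvectorUnitary : Matrix κ κ ℂ)) * (hH.eigenvectorUnitary : Matrix κ κ ℂ) = 1 :=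
      Unitary.coe_star_mul_self hH.eigenvectorUnitary
    have h0 : (Matrix.posSemidef_conjTranspose_mul_self M).sqrt
        = (hH.eigenvectorUnitary : Matrix κ κ ℂ) *
            Matrix.diagonal ((fun r : ℝ => (r : ℂ)) ∘ Real.sqrt ∘ lam) *
          (star (hH.eigenvectorUnitary : Matrix κ κ ℂ)) := rfl
    have h1 : (Matrix.posSemidef_conjTranspose_mul_self M).sqrt.trace = ∑ i, ((σ i : ℝ) : ℂ) := by
      rw [h0, Matrix.trace_mul_cycle, hU, Matrix.one_mul,
        Matrix.trace_diagonal]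
      simp [hσdef]
    unfold traceNorm
    rw [h1, Complex.re_sum]
    simp
  -- Step 2: eigenvectors
  set v : κ → (κ → ℂ) := fun i => hH.eigenvectorBasis i with hvdef
  have hvec : ∀ i, (Mᴴ * M) *ᵥ v i = lam i • v i := fun i => hH.mulVec_eigenvectorBasis i
  have hinner_v : ∀ i j, dotProduct (star (v i)) (v j) = if i = j then 1 else 0 := by
    intro i j
    have h := (orthonormal_iff_ite.mp hH.eigenvectorBasis.orthonormal) i j
    simp [PiLp.inner_apply, RCLike.inner_apply] at h
    rw [← h]
    simp only [dotProduct, hvdef, Pi.star_apply, RCLike.star_def]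
    exact Finset.sum_congr rfl fun x _ => mul_comm _ _
  set m : κ → (κ → ℂ) := fun i => M *ᵥ v i with hmdef
  have hdot : ∀ i j, dotProduct (star (m i)) (m j)
      = ((lam j : ℂ)) * (if i = j then 1 else 0) := by
    intro i j
    have h1 : dotProduct (star (m i)) (m j)
        = dotProduct (star (v i)) ((Mᴴ * M) *ᵥ v j) := by
      simp only [hmdef, Matrix.star_mulVec, Matrix.dotProduct_mulVec, Matrix.vecMul_vecMul]
    have h2 := hinner_v i j
    simp only [dotProduct, Pi.star_apply, RCLike.star_def] at h2
    rw [h1, hvec j]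
    simp [dotProduct, Complex.real_smul, mul_left_comm, ← Finset.mul_sum, h2, mul_ite]
  -- Step 3: the left singular vectors
  set u : κ → (κ → ℂ) := fun i => ((σ i : ℂ))⁻¹ • m i with hudef
  have hu_dot : ∀ i j, dotProduct (star (u i)) (u j)
      = ((σ i : ℂ))⁻¹ * ((σ j : ℂ))⁻¹ * ((lam j : ℂ) * (if i = j then 1 else 0)) := by
    intro i j
    have expand : ∀ x, star (u i) x * u j x
        = ((σ i : ℂ))⁻¹ * ((σ j : ℂ))⁻¹ * (star (m i) x * m j x) := by
      intro x
      simp only [hudef, Pi.smul_apply, Pi.star_apply, smul_eq_mul, star_mul', star_inv₀,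
        RCLike.star_def, Complex.conj_ofReal]
      ring
    calc dotProduct (star (u i)) (u j)
        = ((σ i : ℂ))⁻¹ * ((σ j : ℂ))⁻¹ * dotProduct (star (m i)) (m j) := by
          simp only [dotProduct, expand, ← Finset.mul_sum]
      _ = _ := by rw [hdot i j]
  have hσ_via : ∀ i, dotProduct (star (u i)) (m i) = (σ i : ℂ) := by
    intro i
    have expand : ∀ x, star (u i) x * m i x = ((σ i : ℂ))⁻¹ * (star (m i) x * m i x) := by
      intro x
      simp only [hudef, Pi.smul_apply, Pi.star_apply, smul_eq_mul, star_mul', star_inv₀,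
        RCLike.star_def, Complex.conj_ofReal]
      ring
    have hh : dotProduct (star (u i)) (m i) = ((σ i : ℂ))⁻¹ * ((lam i : ℂ)) := by
      simp only [dotProduct, expand, ← Finset.mul_sum]
      rw [show ∑ x, star (m i) x * m i x = dotProduct (star (m i)) (m i) from rfl,
        hdot i i]
      simp
    rw [hh, ← hσsq i]
    by_cases h : σ i = 0
    · simp [h]
    · have hne : ((σ i : ℂ)) ≠ 0 := by exact_mod_cast h
      push_cast
      field_simp
  have horthu : Orthonormal ℂ (fun i : {i : κ // σ i ≠ 0} =>
      (WithLp.toLp 2 (u i.1) : EuclideanSpace ℂ κ)) := by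
    rw [orthonormal_iff_ite]
    intro i j
    have hdij : (inner ℂ (WithLp.toLp 2 (u i.1) : EuclideanSpace ℂ κ)
        (WithLp.toLp 2 (u j.1) : EuclideanSpace ℂ κ) : ℂ)
        = dotProduct (star (u i.1)) (u j.1) := by
      simp [PiLp.inner_apply, RCLike.inner_apply, dotProduct, mul_comm]
    rw [hdij, hu_dot]
    by_cases h : i = j
    · subst h
      simp only [if_pos rfl]
      have hne : ((σ i.1 : ℂ)) ≠ 0 := by exact_mod_cast i.2
      rw [← hσsq i.1]
      push_cast
      field_simp
    · have hne : (i : κ) ≠ (j : κ) := fun hc => h (Subtype.ext hc)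
      simp [hne, h]
  -- Step 4
  set x : κ → ι → ℂ := fun i k => ∑ j, (starRingEnd ℂ) (φ (k, j)) * u i j with hxdef
  set y : κ → ι → ℂ := fun i k => ∑ j, (starRingEnd ℂ) (ψ (k, j)) * v i j with hydef
  have keyid : ∀ i, dotProduct (star (u i)) (m i)
      = ∑ k, (starRingEnd ℂ) (x i k) * y i k := by
    intro i
    simp only [hxdef, hydef, hmdef, dotProduct, Matrix.mulVec, hMdef, ptraceFst, outer,
      Matrix.of_apply, _root_.map_sum, _root_.map_mul, Pi.star_apply, RCLike.star_def, RingHomCompTriple.comp_apply]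
    simp only [RingHom.id_apply, Finset.sum_mul, Finset.mul_sum]
    conv_lhs => rw [Finset.sum_comm]
    conv_rhs => rw [Finset.sum_comm]
    refine Finset.sum_congr rfl fun a _ => ?_
    conv_rhs => rw [Finset.sum_comm]
    refine Finset.sum_congr rfl fun b _ => ?_
    refine Finset.sum_congr rfl fun k _ => ?_
    ring
  -- Step 5: assembling
  set S : Finset κ := Finset.univ.filter (fun i => σ i ≠ 0) with hSdef
  set ue : {i : κ // σ i ≠ 0} → EuclideanSpace ℂ κ := fun i => WithLp.toLp 2 (u i.1) with huedef
  have horthue : Orthonormal ℂ ue := horthu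
  set avec : ι → EuclideanSpace ℂ κ := fun k => (WithLp.toLp 2 (fun j => ψ (k, j)) : EuclideanSpace ℂ κ)
    with havdef
  set bvec : ι → EuclideanSpace ℂ κ := fun k => (WithLp.toLp 2 (fun j => φ (k, j)) : EuclideanSpace ℂ κ)
    with hbvdef
  have hsum_restrict : ∑ i, σ i = ∑ i ∈ S, σ i := by
    refine (Finset.sum_subset (Finset.subset_univ S) ?_).symm
    intro i _ hi
    have : ¬ σ i ≠ 0 := by simpa [hSdef] using hi
    simpa using not_not.mp this
  have hσ_le : ∀ i, σ i ≤ ∑ k, ‖x i k‖ * ‖y i k‖ := by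
    intro i
    have h1 : (σ i : ℝ) = (∑ k, (starRingEnd ℂ) (x i k) * y i k).re := by
      rw [← keyid i, hσ_via i]; simp
    rw [h1]
    calc (∑ k, (starRingEnd ℂ) (x i k) * y i k).re
        ≤ ‖∑ k, (starRingEnd ℂ) (x i k) * y i k‖ := Complex.re_le_norm _
      _ ≤ ∑ k, ‖(starRingEnd ℂ) (x i k) * y i k‖ := norm_sum_le _ _
      _ = ∑ k, ‖x i k‖ * ‖y i k‖ := by simp [norm_mul]
  have hx_bessel : ∀ k : ι, ∑ i ∈ S, ‖x i k‖ ^ 2 ≤ ∑ j, ‖φ (k, j)‖ ^ 2 := by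
    intro k
    have hb : ‖bvec k‖ ^ 2 = ∑ j, ‖φ (k, j)‖ ^ 2 := by
      rw [hbvdef, EuclideanSpace.norm_eq]
      exact Real.sq_sqrt (Finset.sum_nonneg fun j _ => sq_nonneg _)
    rw [← hb]
    have hS2 : ∑ i ∈ S, ‖x i k‖ ^ 2 = ∑ i : {i : κ // σ i ≠ 0}, ‖x i.1 k‖ ^ 2 := by
      rw [hSdef]
      exact Finset.sum_subtype _ (by simp) _
    rw [hS2]
    have hbessel := horthue.sum_inner_products_le (s := Finset.univ) (bvec k)
    refine le_trans (le_of_eq ?_) hbessel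
    refine Finset.sum_congr rfl fun i _ => ?_
    have hix : (inner ℂ (bvec k) (ue i) : ℂ) = x i.1 k := by
      simp [hbvdef, huedef, hxdef, PiLp.inner_apply, RCLike.inner_apply, mul_comm]
    rw [← hix, norm_inner_symm]
  have hy_bessel : ∀ k : ι, ∑ i ∈ S, ‖y i k‖ ^ 2 ≤ ∑ j, ‖ψ (k, j)‖ ^ 2 := by
    intro k
    have hb : ‖avec k‖ ^ 2 = ∑ j, ‖ψ (k, j)‖ ^ 2 := by
      rw [havdef, EuclideanSpace.norm_eq]
      exact Real.sq_sqrt (Finset.sum_nonneg fun j _ => sq_nonneg _)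
    rw [← hb]
    have hbessel := hH.eigenvectorBasis.orthonormal.sum_inner_products_le (s := S) (avec k)
    refine le_trans (le_of_eq ?_) hbessel
    refine Finset.sum_congr rfl fun i _ => ?_
    have hiy : (inner ℂ (avec k) (hH.eigenvectorBasis i) : ℂ) = y i k := by
      simp [havdef, hydef, hvdef, PiLp.inner_apply, RCLike.inner_apply, mul_comm]
    rw [← hiy, norm_inner_symm]
  have hφ2 : ∑ k : ι, ∑ j : κ, ‖φ (k, j)‖ ^ 2 = 1 := by
    have h := EuclideanSpace.norm_eq φ
    rw [hφ] at h
    have := Real.sqrt_eq_one.mp h.symm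
    rw [← this, Fintype.sum_prod_type]
  have hψ2 : ∑ k : ι, ∑ j : κ, ‖ψ (k, j)‖ ^ 2 = 1 := by
    have h := EuclideanSpace.norm_eq ψ
    rw [hψ] at h
    have := Real.sqrt_eq_one.mp h.symm
    rw [← this, Fintype.sum_prod_type]
  -- Cauchy-Schwarz over S ×ˢ univ
  set T : ℝ := ∑ p ∈ S ×ˢ (Finset.univ : Finset ι), ‖x p.1 p.2‖ * ‖y p.1 p.2‖ with hTdef
  have hT0 : 0 ≤ T := Finset.sum_nonneg fun p _ => mul_nonneg (norm_nonneg _) (norm_nonneg _)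
  have hCS : T ^ 2 ≤ (∑ p ∈ S ×ˢ (Finset.univ : Finset ι), ‖x p.1 p.2‖ ^ 2) *
      (∑ p ∈ S ×ˢ (Finset.univ : Finset ι), ‖y p.1 p.2‖ ^ 2) :=
    Finset.sum_mul_sq_le_sq_mul_sq _ _ _
  have hxsum : ∑ p ∈ S ×ˢ (Finset.univ : Finset ι), ‖x p.1 p.2‖ ^ 2 ≤ 1 := by
    rw [Finset.sum_product]
    rw [Finset.sum_comm]
    calc ∑ k : ι, ∑ i ∈ S, ‖x i k‖ ^ 2 ≤ ∑ k : ι, ∑ j : κ, ‖φ (k, j)‖ ^ 2 :=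
          Finset.sum_le_sum fun k _ => hx_bessel k
      _ = 1 := hφ2
  have hysum : ∑ p ∈ S ×ˢ (Finset.univ : Finset ι), ‖y p.1 p.2‖ ^ 2 ≤ 1 := by
    rw [Finset.sum_product]
    rw [Finset.sum_comm]
    calc ∑ k : ι, ∑ i ∈ S, ‖y i k‖ ^ 2 ≤ ∑ k : ι, ∑ j : κ, ‖ψ (k, j)‖ ^ 2 :=
          Finset.sum_le_sum fun k _ => hy_bessel k
      _ = 1 := hψ2
  have hT1 : T ≤ 1 := by
    have hx0 : 0 ≤ ∑ p ∈ S ×ˢ (Finset.univ : Finset ι), ‖x p.1 p.2‖ ^ 2 :=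
      Finset.sum_nonneg fun p _ => sq_nonneg _
    nlinarith
  calc traceNorm M = ∑ i, σ i := step1
    _ = ∑ i ∈ S, σ i := hsum_restrict
    _ ≤ ∑ i ∈ S, ∑ k, ‖x i k‖ * ‖y i k‖ := Finset.sum_le_sum fun i _ => hσ_le i
    _ = T := by rw [hTdef, Finset.sum_product]
    _ ≤ 1 := hT1

end
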